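/- Let C be a real n×n matrix, D a real n×n symmetric positive semi-definite matrix, and S a real n×n matrix with SᵀS = D. Fix T ≥ 1 and let L be the (nT)×(nT) block lower-triangular Toeplitz matrix whose (t,s) block equals S·C^{t−s} for t ≥ s and 0 otherwise. Then ‖L‖_∞ ≤ √n · Σ_{i=0}^{T−1} ‖S C^i‖_F = √n · Σ_{i=0}^{T−1} √(tr((C^i)ᵀ D C^i)), and the same bound holds for ‖L‖₁. -/

import Mathlib

open Matrix

/-- The maximum-row-sum matrix norm `‖M‖_∞`. -/
noncomputable def rowSumNorm {α β : Type*} [Fintype α] [Fintype β]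
    (A : Matrix α β ℝ) : ℝ :=
  ⨆ i, ∑ j, |A i j|

/-- The maximum-column-sum matrix norm `‖M‖₁`. -/
noncomputable def colSumNorm {α β : Type*} [Fintype α] [Fintype β]
    (A : Matrix α β ℝ) : ℝ :=
  ⨆ j, ∑ i, |A i j|

/-- The Frobenius norm of a real matrix: `‖M‖_F = √tr(MᵀM)`. -/
noncomputable def frobeniusNorm {m n : ℕ} (A : Matrix (Fin m) (Fin n) ℝ) : ℝ :=
  Real.sqrt (Aᵀ * A).trace

lemma trace_eq_sum_sq {m n : ℕ} (A : Matrix (Fin m) (Fin n) ℝ) :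
    (Aᵀ * A).trace = ∑ j, ∑ i, (A i j)^2 := by
  simp [Matrix.trace, Matrix.mul_apply, Matrix.diag, sq]

lemma row_abs_sum_le {m n : ℕ} (A : Matrix (Fin m) (Fin n) ℝ) (i : Fin m) :
    ∑ j, |A i j| ≤ Real.sqrt n * frobeniusNorm A := by
  have h1 : (∑ j, |A i j|)^2 ≤ (∑ _j : Fin n, (1:ℝ)^2) * ∑ j, |A i j|^2 := by
    have := Finset.sum_mul_sq_le_sq_mul_sq Finset.univ (fun _ : Fin n => (1:ℝ))
      (fun j => |A i j|)
    simpa using this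
  have h2 : ∑ j, |A i j|^2 ≤ (Aᵀ * A).trace := by
    rw [trace_eq_sum_sq]
    have : ∑ j, |A i j|^2 = ∑ j, (A i j)^2 := by simp [sq_abs]
    rw [this]
    apply Finset.sum_le_sum; intro j _
    exact Finset.single_le_sum (f := fun k => (A k j)^2)
      (fun k _ => sq_nonneg _) (Finset.mem_univ i)
  have h3 : (∑ j, |A i j|)^2 ≤ (n : ℝ) * (Aᵀ * A).trace := by
    calc (∑ j, |A i j|)^2 ≤ (∑ _j : Fin n, (1:ℝ)^2) * ∑ j, |A i j|^2 := h1
      _ = (n:ℝ) * ∑ j, |A i j|^2 := by simp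
      _ ≤ (n:ℝ) * (Aᵀ * A).trace := mul_le_mul_of_nonneg_left h2 (Nat.cast_nonneg n)
  calc ∑ j, |A i j| = Real.sqrt ((∑ j, |A i j|)^2) := by
        rw [Real.sqrt_sq (Finset.sum_nonneg fun j _ => abs_nonneg _)]
    _ ≤ Real.sqrt ((n:ℝ) * (Aᵀ * A).trace) := Real.sqrt_le_sqrt h3
    _ = Real.sqrt n * frobeniusNorm A := by
        rw [Real.sqrt_mul (Nat.cast_nonneg n)]; rfl

lemma col_abs_sum_le {m n : ℕ} (A : Matrix (Fin m) (Fin n) ℝ) (j : Fin n) :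
    ∑ i, |A i j| ≤ Real.sqrt m * frobeniusNorm A := by
  have := row_abs_sum_le Aᵀ j
  have hfrob : frobeniusNorm Aᵀ = frobeniusNorm A := by
    unfold frobeniusNorm
    rw [Matrix.transpose_transpose, Matrix.trace_mul_comm]
  simpa [hfrob, Matrix.transpose_apply] using this

lemma sum_ite_sub_le {T : ℕ} (g : ℕ → ℝ) (hg : ∀ k, 0 ≤ g k) (a : ℕ) (ha : a < T) :
    ∑ s : Fin T, (if (s:ℕ) ≤ a then g (a - (s:ℕ)) else 0)
      ≤ ∑ k ∈ Finset.range T, g k := by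
  rw [Finset.sum_ite, Finset.sum_const_zero, add_zero]
  have himg : ∑ k ∈ (Finset.univ.filter (fun s : Fin T => (s:ℕ) ≤ a)).image
      (fun s : Fin T => a - (s:ℕ)), g k
      = ∑ s ∈ Finset.univ.filter (fun s : Fin T => (s:ℕ) ≤ a), g (a - (s:ℕ)) :=
    Finset.sum_image (by
      intro x hx y hy hxy
      simp only [Finset.mem_coe, Finset.mem_filter] at hx hy hxy
      have : (x:ℕ) = (y:ℕ) := by omega
      exact Fin.ext this)
  rw [← himg]
  apply Finset.sum_le_sum_of_subset_of_nonneg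
  · intro k hk
    simp only [Finset.mem_image, Finset.mem_filter] at hk
    obtain ⟨s, hs, rfl⟩ := hk
    exact Finset.mem_range.mpr (by omega)
  · intro k _ _; exact hg k

lemma sum_ite_sub_le' {T : ℕ} (g : ℕ → ℝ) (hg : ∀ k, 0 ≤ g k) (a : ℕ) :
    ∑ t : Fin T, (if a ≤ (t:ℕ) then g ((t:ℕ) - a) else 0)
      ≤ ∑ k ∈ Finset.range T, g k := by
  rw [Finset.sum_ite, Finset.sum_const_zero, add_zero]
  have himg : ∑ k ∈ (Finset.univ.filter (fun t : Fin T => a ≤ (t:ℕ))).image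
      (fun t : Fin T => (t:ℕ) - a), g k
      = ∑ t ∈ Finset.univ.filter (fun t : Fin T => a ≤ (t:ℕ)), g ((t:ℕ) - a) :=
    Finset.sum_image (by
      intro x hx y hy hxy
      simp only [Finset.mem_coe, Finset.mem_filter] at hx hy hxy
      have : (x:ℕ) = (y:ℕ) := by omega
      exact Fin.ext this)
  rw [← himg]
  apply Finset.sum_le_sum_of_subset_of_nonneg
  · intro k hk
    simp only [Finset.mem_image, Finset.mem_filter] at hk
    obtain ⟨t, ht, rfl⟩ := hk
    exact Finset.mem_range.mpr (by omega)
  · intro k _ _; exact hg k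

theorem stmt_16 {n T : ℕ} (hT : 1 ≤ T)
    (C D S : Matrix (Fin n) (Fin n) ℝ) (hD : D.PosSemidef) (hSD : Sᵀ * S = D)
    (L : Matrix (Fin T × Fin n) (Fin T × Fin n) ℝ)
    (hL : ∀ p q : Fin T × Fin n,
      L p q = if (q.1 : ℕ) ≤ (p.1 : ℕ)
        then (S * C ^ ((p.1 : ℕ) - (q.1 : ℕ))) p.2 q.2 else 0) :
    rowSumNorm L ≤ Real.sqrt n * ∑ i ∈ Finset.range T, frobeniusNorm (S * C ^ i)
    ∧ (Real.sqrt n * ∑ i ∈ Finset.range T, frobeniusNorm (S * C ^ i)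
        = Real.sqrt n * ∑ i ∈ Finset.range T,
            Real.sqrt ((C ^ i)ᵀ * D * C ^ i).trace)
    ∧ colSumNorm L ≤ Real.sqrt n * ∑ i ∈ Finset.range T, frobeniusNorm (S * C ^ i) := by
  have heq : ∀ i : ℕ, frobeniusNorm (S * C ^ i)
      = Real.sqrt ((C ^ i)ᵀ * D * C ^ i).trace := by
    intro i
    unfold frobeniusNorm
    congr 1
    rw [Matrix.transpose_mul, ← hSD]
    noncomm_ring
  have hg : ∀ k : ℕ, 0 ≤ Real.sqrt n * frobeniusNorm (S * C ^ k) :=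
    fun k => mul_nonneg (Real.sqrt_nonneg _) (Real.sqrt_nonneg _)
  have hRHS : Real.sqrt n * ∑ i ∈ Finset.range T, frobeniusNorm (S * C ^ i)
      = ∑ k ∈ Finset.range T, Real.sqrt n * frobeniusNorm (S * C ^ k) := by
    rw [Finset.mul_sum]
  have heq2 : Real.sqrt n * ∑ i ∈ Finset.range T, frobeniusNorm (S * C ^ i)
      = Real.sqrt n * ∑ i ∈ Finset.range T,
          Real.sqrt ((C ^ i)ᵀ * D * C ^ i).trace := by
    rw [Finset.mul_sum, Finset.mul_sum]
    exact Finset.sum_congr rfl (fun i _ => by rw [heq])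
  refine ⟨?_, heq2, ?_⟩
  · -- row sum
    rcases Nat.eq_zero_or_pos n with hn | hn
    · subst hn
      have : IsEmpty (Fin T × Fin 0) := by
        refine ⟨fun p => ?_⟩; exact p.2.elim0
      rw [rowSumNorm, Real.iSup_of_isEmpty]
      simp
    have : Nonempty (Fin T × Fin n) :=
      ⟨⟨⟨0, hT⟩, ⟨0, hn⟩⟩⟩
    rw [rowSumNorm]
    apply ciSup_le
    intro p
    rw [hRHS]
    calc ∑ q, |L p q|
        = ∑ s : Fin T, ∑ j : Fin n, |L p (s, j)| := by
          rw [← Finset.sum_product']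
          exact Finset.sum_congr rfl (fun q _ => rfl)
      _ ≤ ∑ s : Fin T, (if (s:ℕ) ≤ (p.1:ℕ)
            then Real.sqrt n * frobeniusNorm (S * C ^ ((p.1:ℕ) - (s:ℕ))) else 0) := by
          apply Finset.sum_le_sum
          intro s _
          by_cases h : (s:ℕ) ≤ (p.1:ℕ)
          · simp only [h, if_true]
            calc ∑ j : Fin n, |L p (s, j)|
                = ∑ j : Fin n, |(S * C ^ ((p.1:ℕ) - (s:ℕ))) p.2 j| := by
                  apply Finset.sum_congr rfl; intro j _
                  rw [hL p (s, j)]; simp [h]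
              _ ≤ _ := row_abs_sum_le _ _
          · simp only [h, if_false]
            apply le_of_eq
            apply Finset.sum_eq_zero
            intro j _
            rw [hL p (s, j)]
            simp [h]
      _ ≤ ∑ k ∈ Finset.range T, Real.sqrt n * frobeniusNorm (S * C ^ k) :=
          sum_ite_sub_le _ hg _ p.1.isLt
  · -- col sum
    rcases Nat.eq_zero_or_pos n with hn | hn
    · subst hn
      have : IsEmpty (Fin T × Fin 0) := by
        refine ⟨fun p => ?_⟩; exact p.2.elim0
      rw [colSumNorm, Real.iSup_of_isEmpty]
      simp
    have : Nonempty (Fin T × Fin n) :=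
      ⟨⟨⟨0, hT⟩, ⟨0, hn⟩⟩⟩
    rw [colSumNorm]
    apply ciSup_le
    intro q
    rw [hRHS]
    calc ∑ p, |L p q|
        = ∑ t : Fin T, ∑ i : Fin n, |L (t, i) q| := by
          rw [← Finset.sum_product']
          exact Finset.sum_congr rfl (fun p _ => rfl)
      _ ≤ ∑ t : Fin T, (if (q.1:ℕ) ≤ (t:ℕ)
            then Real.sqrt n * frobeniusNorm (S * C ^ ((t:ℕ) - (q.1:ℕ))) else 0) := by
          apply Finset.sum_le_sum
          intro t _
          by_cases h : (q.1:ℕ) ≤ (t:ℕ)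
          · simp only [h, if_true]
            calc ∑ i : Fin n, |L (t, i) q|
                = ∑ i : Fin n, |(S * C ^ ((t:ℕ) - (q.1:ℕ))) i q.2| := by
                  apply Finset.sum_congr rfl; intro i _
                  rw [hL (t, i) q]; simp [h]
              _ ≤ _ := col_abs_sum_le _ _
          · simp only [h, if_false]
            apply le_of_eq
            apply Finset.sum_eq_zero
            intro i _
            rw [hL (t, i) q]
            simp [h]
      _ ≤ ∑ k ∈ Finset.range T, Real.sqrt n * frobeniusNorm (S * C ^ k) :=
          sum_ite_sub_le' _ hg _
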